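/- Let A = K[f_1,…,f_m] be a graded integral domain with homogeneous generators of positive degree over a field K of characteristic 0. The A-submodule N of Ω(Q(A)/K) generated by all brackets {f,g} of homogeneous elements f,g of positive degree equals the A-submodule generated by the finitely many brackets {f_i, f_j}, 1 ≤ i < j ≤ m. -/

import Mathlib

set_option linter.unusedSectionVars false
set_option maxHeartbeats 1000000

section Abstract
variable {Q M : Type*} [CommRing Q] [AddCommGroup M] [Module Q M]

lemma abstract_add (p q α α' β : Q) (x y z : M) :
    q • (β • (x + y)) - p • ((α + α') • z) =
      (q • (β • x) - p • (α • z)) + (q • (β • y) - p • (α' • z)) := by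
  module

lemma abstract_mul (cp cp' q α α' β : Q) (x y z : M) :
    q • (β • (α • y + α' • x)) - (cp + cp') • ((α * α') • z) =
      α • (q • (β • y) - cp' • (α' • z)) + α' • (q • (β • x) - cp • (α • z)) := by
  module

end Abstract

section Aux
variable (K : Type*) {A : Type*} [Field K] [CommRing A] [IsDomain A] [Algebra K A]

noncomputable def brkt (a b : A) (p q : ℕ) : KaehlerDifferential K (FractionRing A) :=
  (q : FractionRing A) • ((algebraMap A (FractionRing A) b) •
      (KaehlerDifferential.D K (FractionRing A)) (algebraMap A (FractionRing A) a)) -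
  (p : FractionRing A) • ((algebraMap A (FractionRing A) a) •
      (KaehlerDifferential.D K (FractionRing A)) (algebraMap A (FractionRing A) b))

lemma brkt_anti (a b : A) (p q : ℕ) : brkt K b a q p = - brkt K a b p q := by
  simp [brkt]

lemma brkt_self (a : A) (p : ℕ) : brkt K a a p p = 0 := sub_self _

lemma brkt_zero_left (b : A) (p q : ℕ) : brkt K 0 b p q = 0 := by
  simp [brkt]

lemma brkt_zero_right (a : A) (p q : ℕ) : brkt K a 0 p q = 0 := by
  simp [brkt]

lemma brkt_add_left (a a' b : A) (p q : ℕ) :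
    brkt K (a + a') b p q = brkt K a b p q + brkt K a' b p q := by
  simp only [brkt, map_add]
  exact abstract_add _ _ _ _ _ _ _ _

lemma brkt_add_right (a b b' : A) (p q : ℕ) :
    brkt K a (b + b') p q = brkt K a b p q + brkt K a b' p q := by
  rw [brkt_anti, brkt_add_left, brkt_anti K a b, brkt_anti K a b']; abel

lemma brkt_mul_left (a a' b : A) (p p' q : ℕ) :
    brkt K (a * a') b (p + p') q =
      (algebraMap A (FractionRing A) a) • brkt K a' b p' q +
      (algebraMap A (FractionRing A) a') • brkt K a b p q := by
  simp only [brkt, map_mul, Derivation.leibniz, Nat.cast_add]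
  exact abstract_mul _ _ _ _ _ _ _ _ _

lemma brkt_mul_right (a b b' : A) (p q q' : ℕ) :
    brkt K a (b * b') p (q + q') =
      (algebraMap A (FractionRing A) b) • brkt K a b' p q' +
      (algebraMap A (FractionRing A) b') • brkt K a b p q := by
  rw [brkt_anti, brkt_mul_left, brkt_anti K a b, brkt_anti K a b']
  simp [smul_neg]; abel

lemma brkt_algebraMap_right (a : A) (k : K) (p : ℕ) :
    brkt K a (algebraMap K A k) p 0 = 0 := by
  have : algebraMap A (FractionRing A) (algebraMap K A k)
      = algebraMap K (FractionRing A) k := (IsScalarTower.algebraMap_apply K A _ k).symm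
  simp [brkt, this, Derivation.map_algebraMap]

lemma brkt_algebraMap_left (b : A) (k : K) (q : ℕ) :
    brkt K (algebraMap K A k) b 0 q = 0 := by
  rw [brkt_anti, brkt_algebraMap_right, neg_zero]

end Aux


section Main
open DirectSum
variable {K A : Type*} [Field K] [CharZero K] [CommRing A] [IsDomain A] [Algebra K A]
variable (𝒜 : ℕ → Submodule K A) [GradedAlgebra 𝒜] {m : ℕ} (f : Fin m → A) (d : Fin m → ℕ)

noncomputable local instance (priority := 5000) kModA : Module A (KaehlerDifferential K (FractionRing A)) :=
  Module.compHom _ (algebraMap A (FractionRing A))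

noncomputable local instance (priority := 5000) kSMulA : SMul A (KaehlerDifferential K (FractionRing A)) :=
  (kModA (K := K) (A := A)).toSMul

lemma kmod_smul_def (a : A) (ω : KaehlerDifferential K (FractionRing A)) :
    a • ω = algebraMap A (FractionRing A) a • ω := rfl

noncomputable def Ssub : Submodule A (KaehlerDifferential K (FractionRing A)) :=
  Submodule.span A {ω | ∃ i j : Fin m, i < j ∧ ω = brkt K (f i) (f j) (d i) (d j)}

lemma brkt_sum_right {ι' : Type*} (s : Finset ι') (a : A) (g : ι' → A) (p q : ℕ) :
    brkt K a (∑ u ∈ s, g u) p q = ∑ u ∈ s, brkt K a (g u) p q := by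
  induction s using Finset.cons_induction with
  | empty => simp [brkt_zero_right]
  | cons u s hu ih => rw [Finset.sum_cons, brkt_add_right, ih, Finset.sum_cons]

lemma brkt_sum_left {ι' : Type*} (s : Finset ι') (b : A) (g : ι' → A) (p q : ℕ) :
    brkt K (∑ u ∈ s, g u) b p q = ∑ u ∈ s, brkt K (g u) b p q := by
  induction s using Finset.cons_induction with
  | empty => simp [brkt_zero_left]
  | cons u s hu ih => rw [Finset.sum_cons, brkt_add_left, ih, Finset.sum_cons]

lemma gen_mem (i j : Fin m) : brkt K (f i) (f j) (d i) (d j) ∈ Ssub f d := by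
  rcases lt_trichotomy i j with h|h|h
  · exact Submodule.subset_span ⟨i, j, h, rfl⟩
  · subst h; rw [brkt_self]; exact zero_mem _
  · rw [brkt_anti]; exact neg_mem (Submodule.subset_span ⟨j, i, h, rfl⟩)

lemma L1 (hhom : ∀ i, f i ∈ 𝒜 (d i))
    (hgen : Algebra.adjoin K (Set.range f) = ⊤) (i : Fin m) (y : A) (q : ℕ) :
    brkt K (f i) (decompose 𝒜 y q : A) (d i) q ∈ Ssub f d := by
  classical
  have hy : y ∈ Algebra.adjoin K (Set.range f) := by rw [hgen]; trivial
  refine Algebra.adjoin_induction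
    (p := fun x _ => ∀ q, brkt K (f i) (decompose 𝒜 x q : A) (d i) q ∈ Ssub f d)
    ?_ ?_ ?_ ?_ hy q
  · rintro _ ⟨j, rfl⟩ q
    by_cases h : d j = q
    · subst h; rw [decompose_of_mem_same 𝒜 (hhom j)]; exact gen_mem f d i j
    · rw [decompose_of_mem_ne 𝒜 (hhom j) h, brkt_zero_right]; exact zero_mem _
  · intro r q
    by_cases h : q = 0
    · subst h
      rw [decompose_of_mem_same 𝒜 (SetLike.algebraMap_mem_graded 𝒜 r),
        brkt_algebraMap_right]
      exact zero_mem _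
    · rw [decompose_of_mem_ne 𝒜 (SetLike.algebraMap_mem_graded 𝒜 r) (Ne.symm h),
        brkt_zero_right]
      exact zero_mem _
  · intro x y _ _ hx hy q
    rw [decompose_add, DirectSum.add_apply, Submodule.coe_add, brkt_add_right]
    exact add_mem (hx q) (hy q)
  · intro x y _ _ hx hy q
    have key : GradedRing.proj 𝒜 q (x * y) = ∑ u ∈ (decompose 𝒜 x).support,
        (if u ≤ q then (decompose 𝒜 x u : A) * (decompose 𝒜 y (q - u) : A) else 0) := by
      conv_lhs => rw [← DirectSum.sum_support_decompose 𝒜 x, Finset.sum_mul]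
      rw [map_sum]
      refine Finset.sum_congr rfl fun u _ => ?_
      by_cases h : u ≤ q
      · rw [if_pos h, GradedRing.proj_apply,
          DirectSum.coe_decompose_mul_of_left_mem_of_le 𝒜 (SetLike.coe_mem _) h]
      · rw [if_neg h, GradedRing.proj_apply,
          DirectSum.coe_decompose_mul_of_left_mem_of_not_le 𝒜 (SetLike.coe_mem _) h]
    rw [← GradedRing.proj_apply, key, brkt_sum_right]
    refine Submodule.sum_mem _ fun u hu => ?_
    by_cases h : u ≤ q
    · rw [if_pos h]
      obtain ⟨v, rfl⟩ : ∃ v, q = u + v := ⟨q - u, (Nat.add_sub_cancel' h).symm⟩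
      rw [Nat.add_sub_cancel_left, brkt_mul_right]
      refine add_mem ?_ ?_
      · rw [← kmod_smul_def]; exact Submodule.smul_mem _ _ (hy v)
      · rw [← kmod_smul_def]; exact Submodule.smul_mem _ _ (hx u)
    · rw [if_neg h, brkt_zero_right]; exact zero_mem _

lemma L2 (hhom : ∀ i, f i ∈ 𝒜 (d i))
    (hgen : Algebra.adjoin K (Set.range f) = ⊤) (b : A) (q : ℕ) (hb : b ∈ 𝒜 q)
    (x : A) (p : ℕ) :
    brkt K (decompose 𝒜 x p : A) b p q ∈ Ssub f d := by
  classical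
  have hx : x ∈ Algebra.adjoin K (Set.range f) := by rw [hgen]; trivial
  refine Algebra.adjoin_induction
    (p := fun x _ => ∀ p, brkt K (decompose 𝒜 x p : A) b p q ∈ Ssub f d)
    ?_ ?_ ?_ ?_ hx p
  · rintro _ ⟨j, rfl⟩ p
    by_cases h : d j = p
    · subst h
      rw [decompose_of_mem_same 𝒜 (hhom j)]
      have := L1 𝒜 f d hhom hgen j b q
      rwa [decompose_of_mem_same 𝒜 hb] at this
    · rw [decompose_of_mem_ne 𝒜 (hhom j) h, brkt_zero_left]; exact zero_mem _
  · intro r p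
    by_cases h : p = 0
    · subst h
      rw [decompose_of_mem_same 𝒜 (SetLike.algebraMap_mem_graded 𝒜 r),
        brkt_algebraMap_left]
      exact zero_mem _
    · rw [decompose_of_mem_ne 𝒜 (SetLike.algebraMap_mem_graded 𝒜 r) (Ne.symm h),
        brkt_zero_left]
      exact zero_mem _
  · intro z w _ _ hz hw p
    rw [decompose_add, DirectSum.add_apply, Submodule.coe_add, brkt_add_left]
    exact add_mem (hz p) (hw p)
  · intro z w _ _ hz hw p
    have key : GradedRing.proj 𝒜 p (z * w) = ∑ u ∈ (decompose 𝒜 z).support,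
        (if u ≤ p then (decompose 𝒜 z u : A) * (decompose 𝒜 w (p - u) : A) else 0) := by
      conv_lhs => rw [← DirectSum.sum_support_decompose 𝒜 z, Finset.sum_mul]
      rw [map_sum]
      refine Finset.sum_congr rfl fun u _ => ?_
      by_cases h : u ≤ p
      · rw [if_pos h, GradedRing.proj_apply,
          DirectSum.coe_decompose_mul_of_left_mem_of_le 𝒜 (SetLike.coe_mem _) h]
      · rw [if_neg h, GradedRing.proj_apply,
          DirectSum.coe_decompose_mul_of_left_mem_of_not_le 𝒜 (SetLike.coe_mem _) h]
    rw [← GradedRing.proj_apply, key, brkt_sum_left]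
    refine Submodule.sum_mem _ fun u hu => ?_
    by_cases h : u ≤ p
    · rw [if_pos h]
      obtain ⟨v, rfl⟩ : ∃ v, p = u + v := ⟨p - u, (Nat.add_sub_cancel' h).symm⟩
      rw [Nat.add_sub_cancel_left, brkt_mul_left]
      refine add_mem ?_ ?_
      · rw [← kmod_smul_def]; exact Submodule.smul_mem _ _ (hw v)
      · rw [← kmod_smul_def]; exact Submodule.smul_mem _ _ (hz u)
    · rw [if_neg h, brkt_zero_left]; exact zero_mem _



theorem bracket_module_fg_aux
    (hd : ∀ i, 0 < d i) (hhom : ∀ i, f i ∈ 𝒜 (d i)) (hf0 : ∀ i, f i ≠ 0)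
    (hgen : Algebra.adjoin K (Set.range f) = ⊤) :
    letI Q := FractionRing A
    letI ι := algebraMap A (FractionRing A)
    letI D := KaehlerDifferential.D K (FractionRing A)
    letI : Module A (KaehlerDifferential K (FractionRing A)) :=
      Module.compHom _ (algebraMap A (FractionRing A))
    Submodule.span A {ω : KaehlerDifferential K (FractionRing A) |
        ∃ (a b : A) (p q : ℕ), 0 < p ∧ 0 < q ∧ a ∈ 𝒜 p ∧ b ∈ 𝒜 q ∧ a ≠ 0 ∧ b ≠ 0 ∧
          ω = (q : Q) • (ι b • D (ι a)) - (p : Q) • (ι a • D (ι b))} =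
      Submodule.span A {ω : KaehlerDifferential K (FractionRing A) |
        ∃ i j : Fin m, i < j ∧
          ω = (d j : Q) • (ι (f j) • D (ι (f i))) - (d i : Q) • (ι (f i) • D (ι (f j)))} := by
  classical
  refine le_antisymm ?_ ?_
  · rw [Submodule.span_le]
    rintro ω ⟨a, b, p, q, hp, hq, ha, hb, ha0, hb0, rfl⟩
    have key : brkt K a b p q ∈ Ssub f d := by
      have h2 := L2 𝒜 f d hhom hgen b q hb a p
      rwa [DirectSum.decompose_of_mem_same 𝒜 ha] at h2
    exact key
  · rw [Submodule.span_le]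
    rintro ω ⟨i, j, hij, rfl⟩
    exact Submodule.subset_span
      ⟨f i, f j, d i, d j, hd i, hd j, hhom i, hhom j, hf0 i, hf0 j, rfl⟩

end Main

/-- the A-module generated by all brackets {f,g} of homogeneous elements of
    positive degree equals the A-module generated by the brackets {f_i,f_j}, i < j. -/
theorem bracket_module_finitely_generated
    {K A : Type*} [Field K] [CharZero K] [CommRing A] [IsDomain A] [Algebra K A]
    (𝒜 : ℕ → Submodule K A) [GradedAlgebra 𝒜]
    {m : ℕ} (f : Fin m → A) (d : Fin m → ℕ)
    (hd : ∀ i, 0 < d i) (hhom : ∀ i, f i ∈ 𝒜 (d i)) (hf0 : ∀ i, f i ≠ 0)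
    (hgen : Algebra.adjoin K (Set.range f) = ⊤) :
    letI Q := FractionRing A
    letI ι := algebraMap A (FractionRing A)
    letI D := KaehlerDifferential.D K (FractionRing A)
    letI : Module A (KaehlerDifferential K (FractionRing A)) :=
      Module.compHom _ (algebraMap A (FractionRing A))
    Submodule.span A {ω : KaehlerDifferential K (FractionRing A) |
        ∃ (a b : A) (p q : ℕ), 0 < p ∧ 0 < q ∧ a ∈ 𝒜 p ∧ b ∈ 𝒜 q ∧ a ≠ 0 ∧ b ≠ 0 ∧
          ω = (q : Q) • (ι b • D (ι a)) - (p : Q) • (ι a • D (ι b))} =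
      Submodule.span A {ω : KaehlerDifferential K (FractionRing A) |
        ∃ i j : Fin m, i < j ∧
          ω = (d j : Q) • (ι (f j) • D (ι (f i))) - (d i : Q) • (ι (f i) • D (ι (f j)))} :=
  bracket_module_fg_aux 𝒜 f d hd hhom hf0 hgen
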